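/- Let K = Kⁿ-setting over a valued field: E = Kⁿ with the maximum norm, U = U₁ × … × Uₙ ⊆ Kⁿ open, F a topological K-vector space, and f : U → F a C¹-map. Then f is strictly differentiable at every u ∈ U: for every gauge γ on F and ε > 0 there is δ > 0 such that γ(f(z) − f(y) − f'(u)(z − y)) ≤ ε ‖z − y‖_∞ for all y, z ∈ B_δ(u) ∩ U, where f'(u) = df(u,·). -/

import Mathlib

-- aux: positive lower bound for finitely many positive reals
lemma aux_min {n : ℕ} (g : Fin n → ℝ) (hg : ∀ j, 0 < g j) :
    ∃ δ > 0, ∀ j, δ ≤ g j := by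
  induction n with
  | zero => exact ⟨1, one_pos, fun j => j.elim0⟩
  | succ m ih =>
    obtain ⟨δ, hδ, h⟩ := ih (fun j => g j.succ) (fun j => hg j.succ)
    exact ⟨min δ (g 0), lt_min hδ (hg 0), fun j => by
      cases j using Fin.cases with
      | zero => exact min_le_right _ _
      | succ i => exact le_trans (min_le_left _ _) (h i)⟩

-- aux: n-fold sums into a neighborhood
lemma aux_sum_nhds {F : Type*} [AddCommGroup F] [TopologicalSpace F]
    [IsTopologicalAddGroup F] {V : Set F} (hV : V ∈ nhds (0 : F)) (n : ℕ) :
    ∃ W ∈ nhds (0 : F), ∀ v : Fin n → F, (∀ j, v j ∈ W) → ∑ j, v j ∈ V := by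
  induction n generalizing V with
  | zero =>
    exact ⟨V, hV, fun v _ => by simpa using mem_of_mem_nhds hV⟩
  | succ m ih =>
    obtain ⟨W₁, hW₁, h1⟩ := exists_nhds_zero_half hV
    obtain ⟨W₂, hW₂, h2⟩ := ih hW₁
    refine ⟨W₁ ∩ W₂, Filter.inter_mem hW₁ hW₂, fun v hv => ?_⟩
    rw [Fin.sum_univ_succ]
    exact h1 _ (hv 0).1 _ (h2 _ fun j => (hv j.succ).2)

-- aux: scalar of norm between r and ‖c‖ * r
lemma aux_scalar {K : Type*} [NontriviallyNormedField K] {c : K} (hc : 1 < ‖c‖)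
    {r : ℝ} (hr : 0 < r) : ∃ s : K, s ≠ 0 ∧ r ≤ ‖s‖ ∧ ‖s‖ ≤ ‖c‖ * r := by
  have hc0 : c ≠ 0 := by
    intro h; rw [h, norm_zero] at hc; linarith
  obtain ⟨m, hm1, hm2⟩ := exists_mem_Ico_zpow hr hc
  refine ⟨c ^ (m + 1), zpow_ne_zero _ hc0, ?_, ?_⟩
  · rw [norm_zpow]; exact le_of_lt hm2
  · rw [norm_zpow, zpow_add₀ (by positivity : ‖c‖ ≠ 0), zpow_one, mul_comm (‖c‖ ^ m)]
    exact mul_le_mul_of_nonneg_left hm1 (by positivity)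

/-- Proposition C.1 / Lemma C.2, single parameter: a C¹-map on an open
box `U = U₁ × ⋯ × Uₙ ⊆ Kⁿ` (K a valued field, with the maximum norm on `Kⁿ`) into a
topological vector space `F` is strictly differentiable at each `u ∈ U`: for every gauge
`γ` on `F` and every `ε > 0` there is `δ > 0` with
`γ(f(z) − f(y) − f'(u)(z−y)) ≤ ε‖z−y‖` for all `y, z ∈ B_δ(u) ∩ U`. -/
theorem stmt19 {K F : Type*} [NontriviallyNormedField K]
    [AddCommGroup F] [Module K F] [TopologicalSpace F] [IsTopologicalAddGroup F]
    [ContinuousSMul K F] [T2Space F]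
    {n : ℕ} (Us : Fin n → Set K) (hUo : ∀ i, IsOpen (Us i))
    (U : Set (Fin n → K)) (hU : U = Set.univ.pi Us)
    (f : (Fin n → K) → F) (f1 : (Fin n → K) × (Fin n → K) × K → F)
    (hf : ContinuousOn f U)
    (hcont : ContinuousOn f1
      {p : (Fin n → K) × (Fin n → K) × K | p.1 ∈ U ∧ p.1 + p.2.2 • p.2.1 ∈ U})
    (hdq : ∀ (x y : Fin n → K) (t : K), t ≠ 0 → x ∈ U → x + t • y ∈ U →
      f1 (x, y, t) = t⁻¹ • (f (x + t • y) - f x))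
    (hlin : ∀ x ∈ U, IsLinearMap K fun y : Fin n → K => f1 (x, y, 0)) :
    ∀ u ∈ U, ∀ γ : F → ℝ, (∀ v, 0 ≤ γ v) → (∀ (t : K) (v : F), γ (t • v) = ‖t‖ * γ v) →
      UpperSemicontinuous γ →
      ∀ ε : ℝ, 0 < ε → ∃ δ : ℝ, 0 < δ ∧
        ∀ y ∈ Metric.ball u δ ∩ U, ∀ z ∈ Metric.ball u δ ∩ U,
          γ (f z - f y - f1 (u, z - y, 0)) ≤ ε * ‖z - y‖ := by
  intro u hu γ hγ0 hγhom hγusc ε hε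
  obtain ⟨c, hc⟩ := NormedField.exists_one_lt_norm K
  have hc0 : (0:ℝ) < ‖c‖ := lt_trans one_pos hc
  have hγz : γ (0 : F) = 0 := by
    have := hγhom 0 0
    simpa using this
  set ε'' : ℝ := ε / ‖c‖ with hε''def
  have hε''pos : 0 < ε'' := div_pos hε hc0
  -- the sublevel set of the gauge is a neighborhood of 0
  have hV : {v : F | γ v < ε''} ∈ nhds (0 : F) := by
    have := hγusc 0 ε'' (by show γ 0 < ε''; rw [hγz]; exact hε''pos)
    exact this
  obtain ⟨W, hW, hWsum⟩ := aux_sum_nhds hV n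
  set B := balancedCore K W with hBdef
  have hB : B ∈ nhds (0 : F) := balancedCore_mem_nhds_zero hW
  have hBbal : Balanced K B := balancedCore_balanced W
  have hBW : B ⊆ W := balancedCore_subset W
  set e : Fin n → (Fin n → K) := fun j => Pi.single j 1 with he
  set S := {p : (Fin n → K) × (Fin n → K) × K | p.1 ∈ U ∧ p.1 + p.2.2 • p.2.1 ∈ U}
    with hSdef
  have hpj : ∀ j, ((u, e j, (0:K)) : (Fin n → K) × (Fin n → K) × K) ∈ S :=
    fun j => ⟨hu, by simpa using hu⟩
  have key : ∀ j : Fin n, ∃ δj > 0,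
      ∀ p ∈ Metric.ball ((u, e j, (0:K)) : (Fin n → K) × (Fin n → K) × K) δj ∩ S,
        f1 p - f1 (u, e j, 0) ∈ B := by
    intro j
    have hcw : ContinuousWithinAt f1 S (u, e j, 0) := hcont _ (hpj j)
    have hnb : {v : F | v - f1 (u, e j, 0) ∈ B} ∈ nhds (f1 (u, e j, 0)) := by
      have ht : Filter.Tendsto (fun v : F => v - f1 (u, e j, 0))
          (nhds (f1 (u, e j, 0))) (nhds 0) := by
        have := (continuous_sub_right (f1 (u, e j, 0))).tendsto (f1 (u, e j, 0))
        rwa [sub_self] at this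
      exact ht hB
    have hpre := hcw hnb
    rw [Filter.mem_map, Metric.mem_nhdsWithin_iff] at hpre
    obtain ⟨δj, hδj, hsub⟩ := hpre
    exact ⟨δj, hδj, fun p hp => hsub hp⟩
  choose δj hδjpos hδjspec using key
  obtain ⟨δ₁, hδ₁pos, hδ₁le⟩ := aux_min δj hδjpos
  refine ⟨δ₁ / 2, by positivity, ?_⟩
  rintro y ⟨hyb, hyU⟩ z ⟨hzb, hzU⟩
  by_cases hyz : z = y
  · subst hyz
    have h0 : f1 (u, (0 : Fin n → K), (0 : K)) = 0 := (hlin u hu).map_zero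
    rw [sub_self z, sub_self (f z), h0, sub_zero, hγz, norm_zero, mul_zero]
  -- main case
  have hr : (0:ℝ) < ‖z - y‖ := by
    rw [norm_pos_iff]
    exact sub_ne_zero.mpr hyz
  obtain ⟨s, hs0, hs1, hs2⟩ := aux_scalar hc hr
  set t : Fin n → K := fun j => z j - y j with htdef
  set w : ℕ → (Fin n → K) := fun m i => if (i : ℕ) < m then z i else y i with hwdef
  have hyU' : ∀ i, y i ∈ Us i := by
    rw [hU] at hyU; exact fun i => hyU i (Set.mem_univ i)
  have hzU' : ∀ i, z i ∈ Us i := by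
    rw [hU] at hzU; exact fun i => hzU i (Set.mem_univ i)
  have hwU : ∀ m, w m ∈ U := by
    intro m
    rw [hU]
    intro i _
    dsimp [w]
    split
    · exact hzU' i
    · exact hyU' i
  have hws : ∀ j : Fin n, w (j : ℕ) + t j • e j = w ((j : ℕ) + 1) := by
    intro j
    funext i
    simp only [Pi.add_apply, Pi.smul_apply, he, smul_eq_mul, hwdef]
    rcases eq_or_ne i j with rfl | hij
    · simp [t]
    · rw [Pi.single_eq_of_ne hij, mul_zero, add_zero]
      have hne : (i : ℕ) ≠ (j : ℕ) := fun h => hij (Fin.ext h)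
      rcases lt_or_ge (i : ℕ) (j : ℕ) with h | h
      · rw [if_pos h, if_pos (Nat.lt_succ_of_lt h)]
      · rw [if_neg (not_lt.mpr h), if_neg (by omega)]
  have step : ∀ j : Fin n,
      f (w ((j : ℕ) + 1)) - f (w (j : ℕ)) = t j • f1 (w (j : ℕ), e j, t j) := by
    intro j
    by_cases htj : t j = 0
    · have hzy : z j = y j := by
        have := sub_eq_zero.mp htj
        exact this
      have hww : w ((j : ℕ) + 1) = w (j : ℕ) := by
        rw [← hws j, htj, zero_smul, add_zero]
      rw [hww, htj, zero_smul, sub_self]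
    · rw [hdq (w (j : ℕ)) (e j) (t j) htj (hwU _) (by rw [hws j]; exact hwU _),
        smul_inv_smul₀ htj, hws j]
  have telescope : f z - f y = ∑ j : Fin n, t j • f1 (w (j : ℕ), e j, t j) := by
    have h1 : ∑ m ∈ Finset.range n, (f (w (m + 1)) - f (w m)) = f (w n) - f (w 0) :=
      Finset.sum_range_sub (fun m => f (w m)) n
    have h2 : w n = z := by
      funext i; exact if_pos i.isLt
    have h3 : w 0 = y := by
      funext i; simp [w]
    rw [h2, h3] at h1
    rw [← h1, ← Fin.sum_univ_eq_sum_range (fun m => f (w (m + 1)) - f (w m)) n]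
    exact Finset.sum_congr rfl fun j _ => step j
  have linpart : f1 (u, z - y, 0) = ∑ j : Fin n, t j • f1 (u, e j, 0) := by
    set L := IsLinearMap.mk' _ (hlin u hu) with hL
    have hLe : ∀ x, f1 (u, x, 0) = L x := fun x => rfl
    have hzy : z - y = ∑ j : Fin n, t j • e j := by
      have h4 : z - y = ∑ j : Fin n, Pi.single j ((z - y) j) :=
        (Finset.univ_sum_single (z - y)).symm
      rw [h4]
      refine Finset.sum_congr rfl fun j _ => ?_
      have : (z - y) j = t j := rfl
      rw [this, he]
      rw [← Pi.single_smul, smul_eq_mul, mul_one]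
    rw [hLe, hzy, map_sum]
    refine Finset.sum_congr rfl fun j _ => ?_
    rw [map_smul]
    rfl
  set v : Fin n → F := fun j => f1 (w (j : ℕ), e j, t j) - f1 (u, e j, 0) with hvdef
  have herr : f z - f y - f1 (u, z - y, 0) = ∑ j : Fin n, t j • v j := by
    rw [telescope, linpart, ← Finset.sum_sub_distrib]
    exact Finset.sum_congr rfl fun j _ => (smul_sub _ _ _).symm
  -- norms of increments
  have htle : ∀ j : Fin n, ‖t j‖ ≤ ‖z - y‖ := by
    intro j
    have : t j = (z - y) j := rfl
    rw [this]
    exact norm_le_pi_norm (z - y) j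
  -- each v j lies in B
  have hvB : ∀ j : Fin n, v j ∈ B := by
    intro j
    apply hδjspec j
    constructor
    · rw [Metric.mem_ball, Prod.dist_eq, Prod.dist_eq]
      have hd1 : dist (w (j : ℕ)) u < δj j := by
        rw [dist_pi_lt_iff (hδjpos j)]
        intro i
        dsimp [w]
        split
        · exact lt_of_le_of_lt (dist_le_pi_dist z u i)
            (lt_of_lt_of_le hzb (le_trans (half_le_self hδ₁pos.le) (hδ₁le j)))
        · exact lt_of_le_of_lt (dist_le_pi_dist y u i)
            (lt_of_lt_of_le hyb (le_trans (half_le_self hδ₁pos.le) (hδ₁le j)))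
      have hd2 : dist (e j) (e j) < δj j := by
        rw [dist_self]; exact hδjpos j
      have hd3 : dist (t j) (0 : K) < δj j := by
        rw [dist_zero_right]
        calc ‖t j‖ ≤ ‖z - y‖ := htle j
          _ ≤ ‖z - u‖ + ‖u - y‖ := by
              have : z - y = (z - u) + (u - y) := by ring
              rw [this]; exact norm_add_le _ _
          _ < δ₁ / 2 + δ₁ / 2 := by
              apply add_lt_add
              · rwa [← dist_eq_norm]
              · rw [← dist_eq_norm, dist_comm]; exact hyb
          _ = δ₁ := by ring
          _ ≤ δj j := hδ₁le j
      exact max_lt hd1 (max_lt hd2 hd3)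
    · exact ⟨hwU _, by rw [hws j]; exact hwU _⟩
  -- rescale
  set a : Fin n → K := fun j => s⁻¹ * t j with hadef
  have hanorm : ∀ j, ‖a j‖ ≤ 1 := by
    intro j
    rw [hadef]
    dsimp only
    rw [norm_mul, norm_inv]
    calc ‖s‖⁻¹ * ‖t j‖ ≤ ‖s‖⁻¹ * ‖s‖ := by
          apply mul_le_mul_of_nonneg_left _ (by positivity)
          exact le_trans (htle j) (le_trans hs1 le_rfl)
      _ = 1 := inv_mul_cancel₀ (by simpa using hs0)
  have hsum_mem : ∑ j : Fin n, a j • v j ∈ {v : F | γ v < ε''} := by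
    apply hWsum
    intro j
    exact hBW (hBbal.smul_mem (hanorm j) (hvB j))
  have herr2 : f z - f y - f1 (u, z - y, 0) = s • ∑ j : Fin n, a j • v j := by
    rw [herr, Finset.smul_sum]
    refine Finset.sum_congr rfl fun j _ => ?_
    rw [smul_smul, hadef]
    dsimp only
    rw [mul_inv_cancel_left₀ hs0]
  calc γ (f z - f y - f1 (u, z - y, 0)) = ‖s‖ * γ (∑ j : Fin n, a j • v j) := by
        rw [herr2, hγhom]
    _ ≤ ‖s‖ * ε'' := mul_le_mul_of_nonneg_left (le_of_lt hsum_mem) (norm_nonneg s)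
    _ ≤ (‖c‖ * ‖z - y‖) * ε'' := mul_le_mul_of_nonneg_right hs2 hε''pos.le
    _ = ε * ‖z - y‖ := by
        rw [hε''def]
        field_simp
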